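/- The Reduced Velocity Verlet scheme, obtained from Naive Velocity Verlet by reusing the score evaluation s(x_t, m_t) (instead of s(x_t, m_{t+h/2})) in the position update, has local truncation error in the position variable equal to (h²βΓ/4)·(d/dt)[x(t) + s(x(t), m(t))] + O(h³); in particular it is bounded by C·Γ·h². -/

import Mathlib

open Set

/-- Momentum drift `G(x,m) = (β/2) x + (βν/2) m + (βMν/2) r(x,m)`. -/
noncomputable def Gdrift (d : ℕ) (β ν M : ℝ) (r : ((Fin d → ℝ) × (Fin d → ℝ)) → (Fin d → ℝ))
    (p : (Fin d → ℝ) × (Fin d → ℝ)) : Fin d → ℝ :=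
  (β / 2) • p.1 + (β * ν / 2) • p.2 + (β * M * ν / 2) • r p

lemma iterWithin_eq {E : Type*} [NormedAddCommGroup E] [NormedSpace ℝ E]
    {f : ℝ → E} {N : WithTop ℕ∞} {n : ℕ} (hf : ContDiff ℝ N f) (hn : (n : WithTop ℕ∞) ≤ N)
    {s : Set ℝ} (hs : UniqueDiffOn ℝ s) {y : ℝ} (hy : y ∈ s) :
    iteratedDerivWithin n f s y = iteratedDeriv n f y := by
  rw [iteratedDerivWithin_eq_iteratedFDerivWithin, iteratedDeriv_eq_iteratedFDeriv]
  congr 1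
  have H := ((contDiffOn_univ.2 hf).ftaylorSeriesWithin uniqueDiffOn_univ).mono (subset_univ s)
  have h2 := H.eq_iteratedFDerivWithin_of_uniqueDiffOn hn hs hy
  rw [← h2, ftaylorSeriesWithin_univ]
  rfl

lemma taylor2_bound {E : Type*} [NormedAddCommGroup E] [NormedSpace ℝ E]
    {f : ℝ → E} (hf : ContDiff ℝ 3 f) {A t h : ℝ}
    (hA : ∀ y ∈ Icc t (t + h), ‖iteratedDeriv 3 f y‖ ≤ A) (hh : 0 < h) :
    ‖f (t + h) - (f t + h • deriv f t + (h ^ 2 / 2) • deriv (deriv f) t)‖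
      ≤ A / 2 * h ^ 3 := by
  have hlt : t < t + h := by linarith
  have hud := uniqueDiffOn_Icc hlt
  have hmem : t ∈ Icc t (t + h) := ⟨le_rfl, hlt.le⟩
  have key := taylor_mean_remainder_bound (f := f) (n := 2) hlt.le
    (hf.contDiffOn) (right_mem_Icc.2 hlt.le)
    (fun y hy => by
      rw [iterWithin_eq hf le_rfl hud hy]
      exact hA y hy)
  have htay : taylorWithinEval f 2 (Icc t (t + h)) t (t + h)
      = f t + h • deriv f t + (h ^ 2 / 2) • deriv (deriv f) t := by
    rw [taylor_within_apply]
    rw [Finset.sum_range_succ, Finset.sum_range_succ, Finset.sum_range_one]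
    rw [iterWithin_eq hf (by norm_num) hud hmem,
        iterWithin_eq hf (by norm_num) hud hmem,
        iterWithin_eq hf (by norm_num) hud hmem]
    rw [iteratedDeriv_zero, iteratedDeriv_one,
        show iteratedDeriv 2 f = deriv (deriv f) by
          rw [iteratedDeriv_succ, iteratedDeriv_one]]
    norm_num [add_sub_cancel_left]
    module
  rw [htay] at key
  refine le_trans key (le_of_eq ?_)
  rw [add_sub_cancel_left]
  norm_num [Nat.factorial]
  ring

/-- The Reduced Velocity Verlet scheme, which reuses the score evaluation
`s(x_t, m_t)` in the position update, has local truncation error in the position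
variable equal to `(h²βΓ/4) (d/dt)[x(t) + s(x(t), m(t))] + O(h³)`; in particular it
is bounded by `C Γ h²`. -/
theorem rvv_position_local_error
    (d : ℕ) (β Γ ν M : ℝ) (hβ : 0 < β) (hΓ : 0 < Γ) (hν : 0 < ν) (hM : 0 < M)
    (s r : ((Fin d → ℝ) × (Fin d → ℝ)) → (Fin d → ℝ))
    (hs : ContDiff ℝ 2 s) (hr : ContDiff ℝ 2 r)
    (K : ℝ)
    (hbound : ∀ p, ‖s p‖ ≤ K ∧ ‖r p‖ ≤ K ∧
      ‖fderiv ℝ s p‖ ≤ K ∧ ‖fderiv ℝ r p‖ ≤ K ∧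
      ‖iteratedFDeriv ℝ 2 s p‖ ≤ K ∧ ‖iteratedFDeriv ℝ 2 r p‖ ≤ K)
    (a b : ℝ) (hab : a ≤ b)
    (x m : ℝ → (Fin d → ℝ))
    (hx : ∀ t, HasDerivAt x
      ((β * Γ / 2) • x t - (β / (2 * M)) • m t + (β * Γ / 2) • s (x t, m t)) t)
    (hm : ∀ t, HasDerivAt m (Gdrift d β ν M r (x t, m t)) t)
    (D : ℝ → (Fin d → ℝ))
    (hD : ∀ t, HasDerivAt (fun t => x t + s (x t, m t)) (D t) t) :
    ∃ C > 0, ∀ t ∈ Icc a b, ∀ h ∈ Ioc (0:ℝ) 1,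
      (‖x (t + h) -
          (let mhalf := m t + (h/2) • Gdrift d β ν M r (x t, m t);
           x t + h • ((β * Γ / 2) • x t - (β / (2 * M)) • mhalf
             + (β * Γ / 2) • s (x t, m t)))
        - (h ^ 2 * β * Γ / 4) • D t‖ ≤ C * h ^ 3)
      ∧ ‖x (t + h) -
          (let mhalf := m t + (h/2) • Gdrift d β ν M r (x t, m t);
           x t + h • ((β * Γ / 2) • x t - (β / (2 * M)) • mhalf
             + (β * Γ / 2) • s (x t, m t)))‖ ≤ C * Γ * h ^ 2 := by
  classical
  set F : ((Fin d → ℝ) × (Fin d → ℝ)) → (Fin d → ℝ) :=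
    fun p => (β * Γ / 2) • p.1 - (β / (2 * M)) • p.2 + (β * Γ / 2) • s p with hFdef
  set G := Gdrift d β ν M r with hGdef
  have hF : ContDiff ℝ 2 F :=
    ((contDiff_fst.const_smul _).sub (contDiff_snd.const_smul _)).add (hs.const_smul _)
  have hG : ContDiff ℝ 2 G := by
    rw [hGdef]; unfold Gdrift
    exact ((contDiff_fst.const_smul _).add (contDiff_snd.const_smul _)).add (hr.const_smul _)
  have hdx : Differentiable ℝ x := fun t => (hx t).differentiableAt
  have hdm : Differentiable ℝ m := fun t => (hm t).differentiableAt
  have derx : deriv x = fun t => F (x t, m t) := funext fun t => (hx t).deriv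
  have derm : deriv m = fun t => G (x t, m t) := funext fun t => (hm t).deriv
  have hX0 : Continuous fun t => (x t, m t) := hdx.continuous.prodMk hdm.continuous
  have hx1 : ContDiff ℝ 1 x := contDiff_one_iff_deriv.2
    ⟨hdx, by rw [derx]; exact hF.continuous.comp hX0⟩
  have hm1 : ContDiff ℝ 1 m := contDiff_one_iff_deriv.2
    ⟨hdm, by rw [derm]; exact hG.continuous.comp hX0⟩
  have hX1 : ContDiff ℝ 1 fun t => (x t, m t) := hx1.prodMk hm1
  have e2 : (2 : WithTop ℕ∞) = 1 + 1 := by norm_num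
  have e3 : (3 : WithTop ℕ∞) = 2 + 1 := by norm_num
  have hx2 : ContDiff ℝ 2 x := by
    rw [e2, contDiff_succ_iff_deriv]
    exact ⟨hdx, by simp, by rw [derx]; exact (hF.of_le one_le_two).comp hX1⟩
  have hm2 : ContDiff ℝ 2 m := by
    rw [e2, contDiff_succ_iff_deriv]
    exact ⟨hdm, by simp, by rw [derm]; exact (hG.of_le one_le_two).comp hX1⟩
  have hX2 : ContDiff ℝ 2 fun t => (x t, m t) := hx2.prodMk hm2
  have hx3 : ContDiff ℝ 3 x := by
    rw [e3, contDiff_succ_iff_deriv]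
    exact ⟨hdx, by simp, by rw [derx]; exact hF.comp hX2⟩
  -- second derivative of x
  have hFalt : (fun u => F (x u, m u))
      = fun u => (β * Γ / 2) • (x u + s (x u, m u)) - (β / (2 * M)) • m u :=
    funext fun u => by simp only [hFdef]; module
  have hxd2 : ∀ t, HasDerivAt (deriv x)
      ((β * Γ / 2) • D t - (β / (2 * M)) • G (x t, m t)) t := by
    intro t
    rw [derx, hFalt]
    exact ((hD t).const_smul (β * Γ / 2)).sub ((hm t).const_smul (β / (2 * M)))
  have der2 : ∀ t, deriv (deriv x) t
      = (β * Γ / 2) • D t - (β / (2 * M)) • G (x t, m t) := fun t => (hxd2 t).deriv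
  -- bounds on compact sets
  obtain ⟨A, hA⟩ := (isCompact_Icc : IsCompact (Icc a (b + 1))).exists_bound_of_continuousOn
    (hx3.continuous_iteratedDeriv 3 le_rfl).continuousOn
  have hDeq : D = deriv fun t => x t + s (x t, m t) :=
    funext fun t => ((hD t).deriv).symm
  have hDcont : Continuous D := by
    rw [hDeq]
    exact (hx1.add ((hs.of_le one_le_two).comp hX1)).continuous_deriv le_rfl
  obtain ⟨B, hB⟩ := (isCompact_Icc : IsCompact (Icc a b)).exists_bound_of_continuousOn
    hDcont.continuousOn
  set A' := max A 0 with hA'def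
  set B' := max B 0 with hB'def
  have hA'0 : 0 ≤ A' := le_max_right _ _
  have hB'0 : 0 ≤ B' := le_max_right _ _
  refine ⟨A' / 2 + A' / (2 * Γ) + β * B' / 4 + 1, by positivity, ?_⟩
  intro t ht h hh
  set C := A' / 2 + A' / (2 * Γ) + β * B' / 4 + 1 with hCdef
  obtain ⟨hh0, hh1⟩ := hh
  have hAy : ∀ y ∈ Icc t (t + h), ‖iteratedDeriv 3 x y‖ ≤ A' := by
    intro y hy
    refine le_trans (hA y ⟨le_trans ht.1 hy.1, le_trans hy.2 (by linarith [ht.2])⟩)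
      (le_max_left _ _)
  have tb := taylor2_bound hx3 hAy hh0
  have keyeq : x (t + h) -
        (x t + h • ((β * Γ / 2) • x t - (β / (2 * M)) •
            (m t + (h/2) • Gdrift d β ν M r (x t, m t))
          + (β * Γ / 2) • s (x t, m t)))
        - (h ^ 2 * β * Γ / 4) • D t
      = x (t + h) - (x t + h • deriv x t + (h ^ 2 / 2) • deriv (deriv x) t) := by
    rw [der2 t, show deriv x t = F (x t, m t) from (hx t).deriv]
    simp only [hFdef, hGdef]
    module
  have hfirst : ‖x (t + h) -
        (x t + h • ((β * Γ / 2) • x t - (β / (2 * M)) •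
            (m t + (h/2) • Gdrift d β ν M r (x t, m t))
          + (β * Γ / 2) • s (x t, m t)))
        - (h ^ 2 * β * Γ / 4) • D t‖ ≤ C * h ^ 3 := by
    rw [keyeq]
    refine tb.trans ?_
    have : 0 < h ^ 3 := by positivity
    have hCge : A' / 2 ≤ C := by
      rw [hCdef]
      have h1 : 0 ≤ A' / (2 * Γ) := by positivity
      have h2 : 0 ≤ β * B' / 4 := by positivity
      linarith
    nlinarith
  constructor
  · exact hfirst
  · have hDb : ‖D t‖ ≤ B' := le_trans (hB t ht) (le_max_left _ _)
    have hraw : ‖x (t + h) -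
          (x t + h • ((β * Γ / 2) • x t - (β / (2 * M)) •
              (m t + (h/2) • Gdrift d β ν M r (x t, m t))
            + (β * Γ / 2) • s (x t, m t)))
          - (h ^ 2 * β * Γ / 4) • D t‖ ≤ A' / 2 * h ^ 3 := by
      rw [keyeq]; exact tb
    have hsplit : x (t + h) -
          (x t + h • ((β * Γ / 2) • x t - (β / (2 * M)) •
              (m t + (h/2) • Gdrift d β ν M r (x t, m t))
            + (β * Γ / 2) • s (x t, m t)))
        = (x (t + h) -
            (x t + h • ((β * Γ / 2) • x t - (β / (2 * M)) •
                (m t + (h/2) • Gdrift d β ν M r (x t, m t))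
              + (β * Γ / 2) • s (x t, m t)))
            - (h ^ 2 * β * Γ / 4) • D t) + (h ^ 2 * β * Γ / 4) • D t := by
      abel
    rw [hsplit]
    refine le_trans (norm_add_le _ _) ?_
    have hc : ‖(h ^ 2 * β * Γ / 4) • D t‖ ≤ (h ^ 2 * β * Γ / 4) * B' := by
      rw [norm_smul, Real.norm_eq_abs, abs_of_nonneg (by positivity)]
      exact mul_le_mul_of_nonneg_left hDb (by positivity)
    refine le_trans (add_le_add hraw hc) ?_
    have h3le : h ^ 3 ≤ h ^ 2 := pow_le_pow_of_le_one hh0.le hh1 (by norm_num)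
    have hh3 : A' / 2 * h ^ 3 ≤ A' / 2 * h ^ 2 :=
      mul_le_mul_of_nonneg_left h3le (by positivity)
    have hdiv : A' / (2 * Γ) * Γ = A' / 2 := by field_simp
    have hCΓge : A' / 2 + β * Γ * B' / 4 ≤ C * Γ := by
      have hexp : C * Γ = A' / 2 * Γ + A' / (2 * Γ) * Γ + β * B' / 4 * Γ + Γ := by
        rw [hCdef]; ring
      rw [hexp, hdiv]
      have h1 : 0 ≤ A' / 2 * Γ := by positivity
      nlinarith
    have e1 : h ^ 2 * β * Γ / 4 * B' = β * Γ * B' / 4 * h ^ 2 := by ring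
    calc A' / 2 * h ^ 3 + h ^ 2 * β * Γ / 4 * B'
        ≤ A' / 2 * h ^ 2 + β * Γ * B' / 4 * h ^ 2 := by rw [e1]; linarith
      _ = (A' / 2 + β * Γ * B' / 4) * h ^ 2 := by ring
      _ ≤ C * Γ * h ^ 2 := by
          have := mul_le_mul_of_nonneg_right hCΓge (sq_nonneg h)
          linarith
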